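/- Let P be a semistandard Young tableau whose largest entry is x (occurring at least once), and let a be a letter with a < x. Then row-inserting a into the tableau obtained from P by removing the rightmost cell containing x yields the same tableau as first row-inserting a into P and then removing the rightmost cell containing x. -/

import Mathlib

open scoped Classical

namespace KingSSOT

/-! ### Partitions -/

def zeroP : ℕ → ℕ := fun _ => 0

/-- `p` is a partition: weakly decreasing row lengths, eventually zero. -/
def IsPartition (p : ℕ → ℕ) : Prop :=
  (∀ i, p (i + 1) ≤ p i) ∧ ∃ N, p N = 0

/-- number of boxes of a partition -/
noncomputable def psize (p : ℕ → ℕ) : ℕ :=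
  sSup (Set.range fun N => ∑ i ∈ Finset.range N, p i)

/-- length of the `j`-th column (columns indexed starting at 1) -/
noncomputable def colLen (p : ℕ → ℕ) (j : ℕ) : ℕ := sInf {r | p r < j}

/-! ### Oscillating horizontal strips -/

/-- apply one step of a row sequence: a positive entry `r` adds a box in (1-indexed) row `r`,
a negative entry `-r` removes a box from row `r`. -/
def applyStep (p : ℕ → ℕ) (r : ℤ) : ℕ → ℕ := fun k =>
  if (k : ℤ) + 1 = r then p k + 1 else if (k : ℤ) + 1 = -r then p k - 1 else p k

/-- the sequence of partitions of an oscillating horizontal strip with given inside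
and row sequence -/
def partsOf (p0 : ℕ → ℕ) (rows : List ℤ) : List (ℕ → ℕ) := rows.scanl applyStep p0

def outsideOf (p0 : ℕ → ℕ) (rows : List ℤ) : ℕ → ℕ := rows.foldl applyStep p0

/-- the maximal partition `S_*` of an oscillating horizontal strip -/
def starOf (p0 : ℕ → ℕ) (rows : List ℤ) : ℕ → ℕ :=
  (rows.filter fun z => decide (0 < z)).foldl applyStep p0

/-- `q` is obtained from `p` by adding one box in (0-indexed) row `i` -/
def AddBox (p q : ℕ → ℕ) (i : ℕ) : Prop := q i = p i + 1 ∧ ∀ k, k ≠ i → q k = p k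

def StepOK (p : ℕ → ℕ) (r : ℤ) : Prop :=
  (∃ i : ℕ, r = (i : ℤ) + 1 ∧ AddBox p (applyStep p r) i) ∨
  (∃ i : ℕ, r = -((i : ℤ) + 1) ∧ AddBox (applyStep p r) p i)

/-- `(p0, rows)` encodes an oscillating horizontal strip: all intermediate shapes are
partitions, all steps genuinely add/remove one box, and the row numbers are weakly
decreasing. -/
def IsOHS (p0 : ℕ → ℕ) (rows : List ℤ) : Prop :=
  IsPartition p0 ∧ List.Chain' (· ≥ ·) rows ∧
  (∀ q ∈ partsOf p0 rows, IsPartition q) ∧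
  ∀ k, k < rows.length → StepOK ((partsOf p0 rows).getD k zeroP) (rows.getD k 0)

/-- a list of partitions forms an oscillating horizontal strip -/
def IsOHSspan (l : List (ℕ → ℕ)) : Prop :=
  ∃ rows : List ℤ, IsOHS (l.headD zeroP) rows ∧ partsOf (l.headD zeroP) rows = l

/-! ### (Skew) semistandard oscillating tableaux -/

/-- data of a (skew) semistandard oscillating tableau: for each `i`, the inside partition
and the row sequence of the `(i+1)`-st oscillating horizontal strip `T^{(i+1)}`. -/
structure SSOT where
  ins : ℕ → ℕ → ℕ
  rows : ℕ → List ℤ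

def IsSSOT (T : SSOT) : Prop :=
  (∀ i, IsOHS (T.ins i) (T.rows i)) ∧
  (∀ i, T.ins (i + 1) = outsideOf (T.ins i) (T.rows i)) ∧
  ∃ N, ∀ i, N ≤ i → T.rows i = []

def OutsideIs (T : SSOT) (ν : ℕ → ℕ) : Prop := ∃ N, ∀ i, N ≤ i → T.ins i = ν

/-- every partition occurring in `T` has at most `g` columns, i.e. `c(T) ≤ g` -/
def cBound (g : ℕ) (T : SSOT) : Prop :=
  ∀ i, ∀ q ∈ partsOf (T.ins i) (T.rows i), q 0 ≤ g

def wtOf (T : SSOT) : ℕ → ℕ := fun i => (T.rows i).length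

/-- membership in `SSOT_g(ν, m)` with inside `lam` (`lam = zeroP` for honest SSOT) -/
def SSOTmem (g m : ℕ) (lam ν : ℕ → ℕ) (T : SSOT) : Prop :=
  IsSSOT T ∧ T.ins 0 = lam ∧ OutsideIs T ν ∧ (∀ i, m ≤ i → T.rows i = []) ∧ cBound g T

/-- the crystal weight `(g - α_1, …, g - α_m)` of an element of `SSOT_g(ν,m)` -/
def cwt (g : ℕ) (T : SSOT) : ℕ → ℤ := fun i => (g : ℤ) - (T.rows i).length

/-- complement `μ̂` of `μ` in the `m × g` rectangle: `μ̂_i = g - μ_{m+1-i}` -/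
def hatP (m g : ℕ) (μ : ℕ → ℕ) : ℕ → ℕ := fun i => if i < m then g - μ (m - 1 - i) else 0

/-! ### King tableaux -/

/-- A King tableau of shape `μ` for `Sp(2m)`.  The alphabet `1 < 1̄ < 2 < 2̄ < ⋯ < m < m̄`
is encoded by `i ↦ 2i-1`, `ī ↦ 2i`.  Rows and columns are 0-indexed. -/
structure King (m : ℕ) (μ : ℕ → ℕ) where
  entry : ℕ → ℕ → ℕ
  rowsWeak : ∀ r c, c + 1 < μ r → entry r c ≤ entry r (c + 1)
  colsStrict : ∀ r c, c < μ (r + 1) → entry r c < entry (r + 1) c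
  symplectic : ∀ r c, c < μ r → 2 * r + 1 ≤ entry r c
  upperBound : ∀ r c, c < μ r → entry r c ≤ 2 * m
  zeroOutside : ∀ r c, ¬ c < μ r → entry r c = 0

/-- `T` has an entry with value `v` somewhere in (0-indexed) column `c` -/
def hasEntry {m : ℕ} {μ : ℕ → ℕ} (T : King m μ) (c v : ℕ) : Prop :=
  ∃ r, c < μ r ∧ T.entry r c = v

def countEntry (m g : ℕ) {μ : ℕ → ℕ} (T : King m μ) (v : ℕ) : ℕ :=
  ((Finset.range m ×ˢ Finset.range g).filter
    (fun rc => rc.2 < μ rc.1 ∧ T.entry rc.1 rc.2 = v)).card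

/-- the crystal weight of a King tableau: `α_i = #(i) - #(ī)` (here `i` is 0-indexed). -/
def kingWt (m g : ℕ) {μ : ℕ → ℕ} (T : King m μ) : ℕ → ℤ :=
  fun i => (countEntry m g T (2 * i + 1) : ℤ) - countEntry m g T (2 * i + 2)

/-- The defining property of King's bijection `Ψ_{m,g}`: for each `i < m` (the strip
`T^{(i+1)}` of `S`), the horizontal strip `S_*/inside` has no box in (1-indexed) column `j`
iff the letter `i+1` occurs in (0-indexed) column `g-j` of the King tableau, and
`S_*/outside` has a box in column `j` iff the letter `\overline{i+1}` occurs in column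
`g-j`; moreover all partitions of the strips fit in `g` columns. -/
def PsiRel (m g : ℕ) {μ : ℕ → ℕ} (T : King m μ) (S : SSOT) : Prop :=
  ∀ i, i < m →
    (starOf (S.ins i) (S.rows i)) 0 ≤ g ∧
    ∀ j, 1 ≤ j → j ≤ g →
      ((colLen (starOf (S.ins i) (S.rows i)) j = colLen (S.ins i) j) ↔
        hasEntry T (g - j) (2 * i + 1)) ∧
      ((colLen (starOf (S.ins i) (S.rows i)) j
          = colLen (outsideOf (S.ins i) (S.rows i)) j + 1) ↔
        hasEntry T (g - j) (2 * i + 2))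



/-! ### Semistandard Young tableaux as lists of rows, Schensted insertion -/

/-- Schensted row insertion (row bumping) of a letter into a tableau:
bump the first entry strictly larger than the inserted letter. -/
def rowInsert : List (List ℕ) → ℕ → List (List ℕ)
  | [], a => [[a]]
  | r :: rest, a =>
    match r.findIdx? (fun x => decide (a < x)) with
    | none => (r ++ [a]) :: rest
    | some k => r.set k a :: rowInsert rest (r.getD k 0)

def shapeOf (Q : List (List ℕ)) : ℕ → ℕ := fun r => (Q.getD r []).length

def sizeT (Q : List (List ℕ)) : ℕ := Q.flatten.length

/-- add the entry `x` at the end of (0-indexed) row `r` -/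
def placeAt (Q : List (List ℕ)) (r x : ℕ) : List (List ℕ) :=
  if r < Q.length then Q.set r ((Q.getD r []) ++ [x]) else Q ++ [[x]]

def maxEntry (Q : List (List ℕ)) : ℕ := Q.flatten.foldr max 0

/-- remove the rightmost cell containing `x` (for `x` the largest entry of `Q`,
this is the last cell of the topmost row containing `x`). -/
def removeRM (x : ℕ) (Q : List (List ℕ)) : List (List ℕ) :=
  let r := Q.findIdx (fun row => row.contains x)
  (Q.set r ((Q.getD r []).dropLast)).filter (fun row => !row.isEmpty)

/-- repeatedly (k times) remove the rightmost cell containing the current largest entry -/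
def stripK : ℕ → List (List ℕ) → List (List ℕ)
  | 0, Q => Q
  | k + 1, Q => stripK k (removeRM (maxEntry Q) Q)

def getCol (Q : List (List ℕ)) (j : ℕ) : List ℕ := Q.filterMap (fun r => r[j]?)

def transposeT (Q : List (List ℕ)) : List (List ℕ) :=
  (List.range (Q.headD []).length).map (getCol Q)

/-- auxiliary "weak" row bumping (bump the first entry `≥ a`), used to define column
insertion via transposition. -/
def rowInsertW : List (List ℕ) → ℕ → List (List ℕ)
  | [], a => [[a]]
  | r :: rest, a =>
    match r.findIdx? (fun x => decide (a ≤ x)) with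
    | none => (r ++ [a]) :: rest
    | some k => r.set k a :: rowInsertW rest (r.getD k 0)

/-- Schensted column insertion of a letter into a semistandard tableau -/
def colInsert (Q : List (List ℕ)) (a : ℕ) : List (List ℕ) :=
  transposeT (rowInsertW (transposeT Q) a)

def IsSSYT (Q : List (List ℕ)) : Prop :=
  (∀ row ∈ Q, row ≠ [] ∧ List.Chain' (· ≤ ·) row) ∧
  List.Chain' (· ≥ ·) (Q.map List.length) ∧
  (∀ r c, c < (Q.getD (r + 1) []).length →
    (Q.getD r []).getD c 0 < (Q.getD (r + 1) []).getD c 0)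

/-! ### Matrices, two-line arrays, and column RSK -/

/-- the two-line array `w_M` of a matrix (`1`-indexed entries, support in `[1,n]²`):
top entries weakly increasing, bottom entries weakly decreasing within a fixed top entry. -/
def twoLine (M : ℕ → ℕ → ℕ) (n : ℕ) : List (ℕ × ℕ) :=
  (List.range n).flatMap fun i =>
    ((List.range n).reverse).flatMap fun j =>
      List.replicate (M (i + 1) (j + 1)) (i + 1, j + 1)

/-- the `P`-tableau of column RSK: column-insert the bottom row of `w_M` -/
def PM (M : ℕ → ℕ → ℕ) (n : ℕ) : List (List ℕ) :=
  (twoLine M n).foldl (fun Q c => colInsert Q c.2) []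

def trM (M : ℕ → ℕ → ℕ) : ℕ → ℕ → ℕ := fun p q => M q p

/-- the `Q`-tableau of column RSK: `Q(M) = P(Mᵀ)` -/
def Qm (M : ℕ → ℕ → ℕ) (n : ℕ) : List (List ℕ) := PM (trM M) n

def rowSumM (M : ℕ → ℕ → ℕ) (n i : ℕ) : ℕ := ∑ j ∈ Finset.range n, M i (j + 1)

def suppIn (M : ℕ → ℕ → ℕ) (n : ℕ) : Prop :=
  ∀ p q, M p q ≠ 0 → 1 ≤ p ∧ p ≤ n ∧ 1 ≤ q ∧ q ≤ n

/-- membership in `M̂_m^g`: symmetric, even diagonal, `c(M) ≤ 2g` -/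
def MhatMem (m g : ℕ) (M : ℕ → ℕ → ℕ) : Prop :=
  suppIn M m ∧ (∀ p q, M p q = M q p) ∧ (∀ p, 2 ∣ M p p) ∧
  ((PM M m).headD []).length ≤ 2 * g

/-! ### type-A crystal operators on tableaux -/

/-- row reading word with cell positions: rows top to bottom, right to left in each row -/
def cellsOf (Q : List (List ℕ)) : List (ℕ × ℕ × ℕ) :=
  (Q.zipIdx.map Prod.swap).flatMap fun p => ((p.2.zipIdx.map Prod.swap).reverse).map fun q => (p.1, q.1, q.2)

/-- bracketing for letters `i, i+1` along the reading word.  Returns the positions of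
unpaired letters `i+1` (chronological order) and the stack of unpaired `i`'s
(most recent first). -/
def pairState (i : ℕ) (cs : List (ℕ × ℕ × ℕ)) : List (ℕ × ℕ) × List (ℕ × ℕ) :=
  cs.foldl
    (fun st c =>
      if c.2.2 = i then (st.1, (c.1, c.2.1) :: st.2)
      else if c.2.2 = i + 1 then
        match st.2 with
        | [] => (st.1 ++ [(c.1, c.2.1)], st.2)
        | _ :: t => (st.1, t)
      else st)
    ([], [])

def setCell (Q : List (List ℕ)) (r c v : ℕ) : List (List ℕ) :=
  Q.set r ((Q.getD r []).set c v)

/-- crystal operator `e_i` on semistandard tableaux: change the last unpaired `i+1` to `i` -/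
def eT (i : ℕ) (Q : List (List ℕ)) : Option (List (List ℕ)) :=
  match (pairState i (cellsOf Q)).1.getLast? with
  | none => none
  | some rc => some (setCell Q rc.1 rc.2 i)

/-- crystal operator `f_i` on semistandard tableaux: change the first unpaired `i` to `i+1` -/
def fT (i : ℕ) (Q : List (List ℕ)) : Option (List (List ℕ)) :=
  match (pairState i (cellsOf Q)).2.getLast? with
  | none => none
  | some rc => some (setCell Q rc.1 rc.2 (i + 1))

/-! ### operators `e_i^Q`, `e_i^P` on matrices -/

/-- bottom entries of the columns of `w_M` with top entry `i`, in weakly decreasing order -/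
def rowListM (M : ℕ → ℕ → ℕ) (n i : ℕ) : List ℕ :=
  ((List.range n).reverse).flatMap fun j => List.replicate (M i (j + 1)) (j + 1)

/-- remove the first element `< q` from a weakly decreasing list (i.e. the largest one) -/
def removeLtNat (q : ℕ) : List ℕ → Option (List ℕ)
  | [] => none
  | p :: t => if p < q then some t else (removeLtNat q t).map (p :: ·)

/-- pairing `(p, q)`, `p < q`, between the (decreasingly sorted) bottom entries of rows
`i` and `i+1`; returns (unpaired elements of `A`, unpaired elements of `B`),
both in decreasing order. -/
def pairRows (A B : List ℕ) : List ℕ × List ℕ :=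
  B.foldl
    (fun st q =>
      match removeLtNat q st.1 with
      | some A' => (A', st.2)
      | none => (st.1, st.2 ++ [q]))
    (A, [])

def updM (M : ℕ → ℕ → ℕ) (a b v : ℕ) : ℕ → ℕ → ℕ :=
  fun p q => if p = a ∧ q = b then v else M p q

/-- `e_i^Q`: replace the unpaired column `(i+1; b)` of `w_M` with largest `b` by `(i; b)` -/
def eQmat (M : ℕ → ℕ → ℕ) (n i : ℕ) : Option (ℕ → ℕ → ℕ) :=
  match (pairRows (rowListM M n i) (rowListM M n (i + 1))).2.head? with
  | none => none
  | some b => some (updM (updM M (i + 1) b (M (i + 1) b - 1)) i b (M i b + 1))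

/-- `f_i^Q`: replace the unpaired column `(i; a)` of `w_M` with smallest `a` by `(i+1; a)` -/
def fQmat (M : ℕ → ℕ → ℕ) (n i : ℕ) : Option (ℕ → ℕ → ℕ) :=
  match (pairRows (rowListM M n i) (rowListM M n (i + 1))).1.getLast? with
  | none => none
  | some a => some (updM (updM M i a (M i a - 1)) (i + 1) a (M (i + 1) a + 1))

def ePmat (M : ℕ → ℕ → ℕ) (n i : ℕ) : Option (ℕ → ℕ → ℕ) :=
  (eQmat (trM M) n i).map trM

def fPmat (M : ℕ → ℕ → ℕ) (n i : ℕ) : Option (ℕ → ℕ → ℕ) :=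
  (fQmat (trM M) n i).map trM

/-- `ẽ_i = e_i^P ∘ e_i^Q` on matrices -/
def etM (M : ℕ → ℕ → ℕ) (n i : ℕ) : Option (ℕ → ℕ → ℕ) :=
  (eQmat M n i).bind fun M' => ePmat M' n i

/-- `f̃_i = f_i^P ∘ f_i^Q` on matrices -/
def ftM (M : ℕ → ℕ → ℕ) (n i : ℕ) : Option (ℕ → ℕ → ℕ) :=
  (fQmat M n i).bind fun M' => fPmat M' n i


/-! ### Φ and local operators -/


/-- standardization: concatenate the partition sequences of the strips of `T`
(up to strip `N`), dropping repeated endpoints -/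
def stdConcat (T : SSOT) (N : ℕ) : List (ℕ → ℕ) :=
  partsOf (T.ins 0) (T.rows 0) ++
    (List.range N).flatMap fun k => (partsOf (T.ins (k + 1)) (T.rows (k + 1))).tail

/-- `β_i = α_1 + ⋯ + α_i` for `α = wt(T)` -/
def betaT (T : SSOT) (i : ℕ) : ℕ := ∑ k ∈ Finset.range i, (T.rows k).length

/-- the semistandardization value of the index `p ∈ [1, m']`:
the `i` with `β_{i-1} < p ≤ β_i` -/
noncomputable def vOf (T : SSOT) (p : ℕ) : ℕ := sInf {i | p ≤ betaT T i}

/-- the recording data of the reverse row-insertion procedure along the standardization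
`lams`: `V p` are the recording tableaux, and `inv` records the involution pairs. -/
def PhiRec (lams : List (ℕ → ℕ)) (V : ℕ → List (List ℕ)) (inv : ℕ → ℕ) : Prop :=
  V 0 = [] ∧
  ∀ p, p < lams.length - 1 →
    (∃ r, AddBox (lams.getD p zeroP) (lams.getD (p + 1) zeroP) r ∧
      V (p + 1) = placeAt (V p) r (p + 1)) ∨
    (∃ r j, AddBox (lams.getD (p + 1) zeroP) (lams.getD p zeroP) r ∧
      shapeOf (V (p + 1)) = lams.getD (p + 1) zeroP ∧
      rowInsert (V (p + 1)) j = V p ∧ inv (p + 1) = j ∧ inv j = p + 1)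

/-- the graph of the map `Φ`: `M` is the semistandardization (with respect to `wt T`) of
the fixed-point-free involution `inv` produced by the reverse row-insertion recording
procedure on the standardization of `T`. -/
def PhiRel (T : SSOT) (M : ℕ → ℕ → ℕ) : Prop :=
  ∃ (N : ℕ) (V : ℕ → List (List ℕ)) (inv : ℕ → ℕ),
    (∀ i, N ≤ i → T.rows i = []) ∧
    PhiRec (stdConcat T N) V inv ∧
    ∀ a b, M a b =
      ((Finset.Icc 1 ((stdConcat T N).length - 1)).filter
        (fun p => vOf T p = a ∧ vOf T (inv p) = b)).card

/-! ### the explicit local crystal operators on SSOT -/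

def posM (l : List ℤ) : Multiset ℕ :=
  ↑(l.filterMap fun z => if 0 < z then some z.toNat else none)

def negM (l : List ℤ) : Multiset ℕ :=
  ↑(l.filterMap fun z => if z < 0 then some (-z).toNat else none)

/-- `A ↑ B = (A \ B) ⊎ ((A ∩ B) + 1)` -/
def upM (A B : Multiset ℕ) : Multiset ℕ := (A - B) + (A ∩ B).map (· + 1)

/-- `A ↓ B = (A \ B) ⊎ ((A ∩ B) - 1)` -/
def downM (A B : Multiset ℕ) : Multiset ℕ := (A - B) + (A ∩ B).map (· - 1)

/-- the multiset `C_i(T) = r⁺(T^{(i)}) ⊎ (- r̄⁻(T^{(i)}))` (paper-indexed `i ≥ 1`) -/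
def Cmul (T : SSOT) (i : ℕ) : Multiset ℤ :=
  (posM (T.rows (i - 1))).map (fun n => (n : ℤ)) +
    (upM (negM (T.rows (i - 1))) (posM (T.rows i))).map (fun n => -(n : ℤ))

/-- the multiset `D_i(T) = r̄⁺(T^{(i+1)}) ⊎ (- r⁻(T^{(i+1)}))` (paper-indexed `i ≥ 1`) -/
def Dmul (T : SSOT) (i : ℕ) : Multiset ℤ :=
  (upM (posM (T.rows i)) (negM (T.rows (i - 1)))).map (fun n => (n : ℤ)) +
    (negM (T.rows i)).map (fun n => -(n : ℤ))

noncomputable def sortDesc (s : Multiset ℤ) : List ℤ := (s.sort (· ≤ ·)).reverse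

def removeLtInt (q : ℤ) : List ℤ → Option (List ℤ)
  | [] => none
  | p :: t => if p < q then some t else (removeLtInt q t).map (p :: ·)

/-- bracketing between `C` and `D` (both sorted decreasingly): pair `p ∈ C` with `q ∈ D`
whenever `p < q`; returns the unpaired elements of `C` and of `D`, decreasingly. -/
def pairZ (A B : List ℤ) : List ℤ × List ℤ :=
  B.foldl
    (fun st q =>
      match removeLtInt q st.1 with
      | some A' => (A', st.2)
      | none => (st.1, st.2 ++ [q]))
    (A, [])

def posZ (s : Multiset ℤ) : Multiset ℕ := (s.filter (fun z => 0 < z)).map Int.toNat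
def negZ (s : Multiset ℤ) : Multiset ℕ := (s.filter (fun z => z < 0)).map (fun z => (-z).toNat)

/-- row sequence of a strip with positive part `rp` and negative part `rm` -/
noncomputable def rowsFrom (rp rm : Multiset ℕ) : List ℤ :=
  ((rp.sort (· ≤ ·)).reverse).map (fun n => (n : ℤ)) ++
    (rm.sort (· ≤ ·)).map (fun n => -(n : ℤ))

/-- rebuild strips `i-1` and `i` (0-indexed) of `T` from new multisets `C`, `D` by
inverting the `↑`-operations -/
noncomputable def rebuild (T : SSOT) (i : ℕ) (C D : Multiset ℤ) : SSOT :=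
  let rows1 := rowsFrom (posZ C) (downM (negZ C) (posZ D))
  let rows2 := rowsFrom (downM (posZ D) (negZ C)) (negZ D)
  ⟨fun j => if j = i then outsideOf (T.ins (i - 1)) rows1 else T.ins j,
   fun j => if j = i - 1 then rows1 else if j = i then rows2 else T.rows j⟩

/-- raw local operator `ẽ_i` (paper-indexed `i ≥ 1`): after bracketing, move the largest
unpaired element of `D_i(T)` into `C_i(T)` -/
noncomputable def eLoc (i : ℕ) (T : SSOT) : Option SSOT :=
  match (pairZ (sortDesc (Cmul T i)) (sortDesc (Dmul T i))).2.head? with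
  | none => none
  | some b => some (rebuild T i (b ::ₘ Cmul T i) ((Dmul T i).erase b))

/-- raw local operator `f̃_i` (paper-indexed `i ≥ 1`): after bracketing, move the smallest
unpaired element of `C_i(T)` into `D_i(T)` -/
noncomputable def fLoc (i : ℕ) (T : SSOT) : Option SSOT :=
  match (pairZ (sortDesc (Cmul T i)) (sortDesc (Dmul T i))).1.getLast? with
  | none => none
  | some a => some (rebuild T i ((Cmul T i).erase a) (a ::ₘ Dmul T i))

/-- raw local operator `ẽ_0`: delete one addition and one removal of a box in row 1
from `T^{(1)}` -/
noncomputable def e0Loc (T : SSOT) : Option SSOT :=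
  if (1 : ℤ) ∈ T.rows 0 ∧ (-1 : ℤ) ∈ T.rows 0 then
    some ⟨T.ins, fun j => if j = 0 then ((T.rows 0).erase 1).erase (-1) else T.rows j⟩
  else none

/-- raw local operator `f̃_0`: append one addition and one removal of a box in row 1
to `T^{(1)}` -/
def f0Loc (T : SSOT) : Option SSOT :=
  some ⟨T.ins, fun j =>
    if j = 0 then
      ((T.rows 0).filter fun z => decide (0 < z)) ++
        (1 :: (-1) :: ((T.rows 0).filter fun z => decide (z < 0)))
    else T.rows j⟩

/-- the local operator `ẽ_i` relative to an ambient set: the result is `0` if it is not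
in the ambient set -/
noncomputable def eStepA (amb : SSOT → Prop) (i : ℕ) (T : SSOT) : Option SSOT :=
  match (if i = 0 then e0Loc T else eLoc i T) with
  | none => none
  | some T' => if amb T' then some T' else none

noncomputable def fStepA (amb : SSOT → Prop) (i : ℕ) (T : SSOT) : Option SSOT :=
  match (if i = 0 then f0Loc T else fLoc i T) with
  | none => none
  | some T' => if amb T' then some T' else none

noncomputable def ePowA (amb : SSOT → Prop) (i : ℕ) : ℕ → SSOT → Option SSOT
  | 0, T => some T
  | k + 1, T => (eStepA amb i T).bind (ePowA amb i k)

noncomputable def fPowA (amb : SSOT → Prop) (i : ℕ) : ℕ → SSOT → Option SSOT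
  | 0, T => some T
  | k + 1, T => (fStepA amb i T).bind (fPowA amb i k)

/-- `ε_i(T) = max {k : ẽ_i^k(T) ≠ 0}` -/
noncomputable def epsA (amb : SSOT → Prop) (i : ℕ) (T : SSOT) : ℕ :=
  sSup {k | (ePowA amb i k T).isSome}

/-- `φ_i(T) = max {k : f̃_i^k(T) ≠ 0}` -/
noncomputable def phiA (amb : SSOT → Prop) (i : ℕ) (T : SSOT) : ℕ :=
  sSup {k | (fPowA amb i k T).isSome}



/-! ### auxiliary lemmas for Statement 7 -/

private lemma set_eq_dropLast_append : ∀ (l : List ℕ) (i a : ℕ), i + 1 = l.length →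
    l.set i a = l.dropLast ++ [a] := by
  intro l
  induction l with
  | nil => intro i a h; simp at h
  | cons y t ih =>
    intro i a h
    cases i with
    | zero =>
      have : t = [] := by
        cases t with
        | nil => rfl
        | cons z t' => simp at h
      subst this; rfl
    | succ i =>
      have ht : t ≠ [] := by
        intro hh; subst hh; simp at h
      simp only [List.set_cons_succ, List.dropLast_cons_of_ne_nil ht, List.cons_append,
        List.cons.injEq, true_and]
      exact ih i a (by simpa using h)

private lemma dropLast_set (l : List ℕ) (i a : ℕ) (h : i + 1 < l.length) :
    (l.set i a).dropLast = l.dropLast.set i a := by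
  apply List.ext_getElem
  · simp
  · intro n h1 h2
    simp only [List.length_dropLast, List.length_set] at h1 h2
    simp [List.getElem_dropLast, List.getElem_set]

private lemma rowInsert_ne_nil : ∀ (Q : List (List ℕ)) (c : ℕ),
    (∀ row ∈ Q, row ≠ []) → ∀ row ∈ rowInsert Q c, row ≠ [] := by
  intro Q
  induction Q with
  | nil =>
    intro c _ row hr
    simp only [rowInsert, List.mem_singleton] at hr
    subst hr; simp
  | cons r rest ih =>
    intro c h row hr
    rw [rowInsert] at hr
    cases hfi : r.findIdx? (fun x => decide (c < x)) with
    | none =>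
      rw [hfi] at hr
      simp only [List.mem_cons] at hr
      rcases hr with rfl | hr
      · simp
      · exact h row (List.mem_cons_of_mem _ hr)
    | some k =>
      rw [hfi] at hr
      simp only [List.mem_cons] at hr
      rcases hr with rfl | hr
      · have := h r (List.mem_cons_self)
        simpa [List.set] using fun hh => this (by simpa using congrArg List.length hh)
      · exact ih (r.getD k 0) (fun row hrow => h row (List.mem_cons_of_mem _ hrow)) row hr

private lemma removeRM_cons_not (x : ℕ) (r : List ℕ) (rest : List (List ℕ))
    (hx : x ∉ r) (hne : r ≠ []) :
    removeRM x (r :: rest) = r :: removeRM x rest := by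
  have hc : r.contains x = false := by simpa using hx
  have hie : r.isEmpty = false := by simpa using hne
  simp [removeRM, List.findIdx_cons, hx, hie]

private lemma removeRM_cons_mem (x : ℕ) (r : List ℕ) (rest : List (List ℕ)) (hx : x ∈ r) :
    removeRM x (r :: rest) = (r.dropLast :: rest).filter (fun row => !row.isEmpty) := by
  have hc : r.contains x = true := by simpa using hx
  simp only [removeRM, List.findIdx_cons, hc, cond_true, List.set_cons_zero,
    List.getD_cons_zero]

private lemma le_getLast_of_mem : ∀ (r : List ℕ) (h : r ≠ []) (y : ℕ), y ∈ r →
    List.Chain' (· ≤ ·) r → y ≤ r.getLast h := by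
  intro r
  induction r with
  | nil => simp
  | cons a t ih =>
    intro h y hy hc
    cases t with
    | nil =>
      simp only [List.mem_singleton] at hy
      subst hy; simp
    | cons b t' =>
      rw [List.getLast_cons (by simp)]
      rcases List.mem_cons.1 hy with rfl | hy
      · exact le_trans (List.isChain_cons_cons.1 hc).1
          (ih (by simp) b (by simp) (List.isChain_cons_cons.1 hc).2)
      · exact ih (by simp) y hy (List.isChain_cons_cons.1 hc).2

private lemma getLast_eq_of_max (r : List ℕ) (x : ℕ) (hs : List.Chain' (· ≤ ·) r)
    (hmem : x ∈ r) (hmax : ∀ y ∈ r, y ≤ x) (h : r ≠ []) :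
    r.getLast h = x :=
  le_antisymm (hmax _ (List.getLast_mem h)) (le_getLast_of_mem r h x hmem hs)



private lemma filter_ne_nil (l : List (List ℕ)) (hl : ∀ row ∈ l, row ≠ []) :
    l.filter (fun row => !row.isEmpty) = l := by
  rw [List.filter_eq_self]
  intro row hr
  simpa using hl row hr

private lemma rowInsert_cons_none (r : List ℕ) (rest : List (List ℕ)) (a : ℕ)
    (h : r.findIdx? (fun y => decide (a < y)) = none) :
    rowInsert (r :: rest) a = (r ++ [a]) :: rest := by
  rw [rowInsert, h]

private lemma rowInsert_cons_some (r : List ℕ) (rest : List (List ℕ)) (a k : ℕ)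
    (h : r.findIdx? (fun y => decide (a < y)) = some k) :
    rowInsert (r :: rest) a = r.set k a :: rowInsert rest (r.getD k 0) := by
  rw [rowInsert, h]

private lemma key (x : ℕ) : ∀ (P : List (List ℕ)) (a : ℕ),
    (∀ row ∈ P, row ≠ [] ∧ List.Chain' (· ≤ ·) row) →
    List.Chain' (· ≥ ·) (P.map List.length) →
    (∀ r c, c < ((P.getD (r + 1) []).length) →
      (P.getD r []).getD c 0 < (P.getD (r + 1) []).getD c 0) →
    (∀ row ∈ P, ∀ y ∈ row, y ≤ x) →
    (∃ row ∈ P, x ∈ row) → a < x →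
    rowInsert (removeRM x P) a = removeRM x (rowInsert P a) := by
  intro P
  induction P with
  | nil =>
    rintro a _ _ _ _ ⟨row, hrow, _⟩ _
    simp at hrow
  | cons r rest ih =>
    intro a hrows hlen hcol hmax hocc ha
    obtain ⟨hne, hsort⟩ := hrows r (List.mem_cons_self)
    by_cases hxr : x ∈ r
    · -- r is the first row containing x
      have hlast : r.getLast hne = x :=
        getLast_eq_of_max r x hsort hxr (hmax r (List.mem_cons_self)) hne
      by_cases hL1 : r.length = 1
      · -- r = [x] and rest = []
        obtain ⟨y, rfl⟩ := List.length_eq_one_iff.1 hL1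
        have hyx : x = y := by simpa using hxr
        subst hyx
        have hrest : rest = [] := by
          cases rest with
          | nil => rfl
          | cons s rest' =>
            exfalso
            obtain ⟨hsne, _⟩ := hrows s (by simp)
            have hsl : s.length ≤ 1 := (List.isChain_cons_cons.1 hlen).1
            have hsl1 : s.length = 1 := le_antisymm hsl (by
              cases s with
              | nil => exact absurd rfl hsne
              | cons _ _ => simp)
            have h0 : (0 : ℕ) < (([x] :: s :: rest').getD 1 []).length := by
              simpa using hsl1 ▸ Nat.one_pos
            have := hcol 0 0 h0
            simp only [List.getD_cons_zero, List.getD_cons_succ] at this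
            have hmem0 : s.getD 0 0 ∈ s := by
              rw [List.getD_eq_getElem _ _ (by omega)]
              exact List.getElem_mem _
            have := hmax s (by simp) _ hmem0
            simp [List.getD] at *
            omega
        subst hrest
        have h1 : removeRM x [[x]] = [] := by
          rw [removeRM_cons_mem x [x] [] (by simp)]; simp
        have hf0 : [x].findIdx? (fun y => decide (a < y)) = some 0 := by
          simp [List.findIdx?_cons, ha]
        have h2 : rowInsert [[x]] a = [[a], [x]] := by
          rw [rowInsert_cons_some [x] [] a 0 hf0]
          simp [rowInsert]
        rw [h1, h2]
        rw [removeRM_cons_not x [a] [[x]] (by simp; omega) (by simp)]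
        rw [h1]
        simp [rowInsert]
      · -- r has length ≥ 2
        have hL2 : 2 ≤ r.length := by
          have : r.length ≠ 0 := fun h => hne (List.length_eq_zero_iff.1 h)
          omega
        cases hfi : r.findIdx? (fun y => decide (a < y)) with
        | none =>
          exfalso
          have := List.findIdx?_eq_none_iff.1 hfi x hxr
          simp [ha] at this
        | some k =>
          obtain ⟨hk, hpk, hbef⟩ := List.findIdx?_eq_some_iff_getElem.1 hfi
          simp only [decide_eq_true_eq] at hpk
          have hbef' : ∀ j (hj : j < k), r[j]'(by omega) ≤ a := by
            intro j hj
            have := hbef j hj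
            simpa using this
          have hdne : r.dropLast ≠ [] := by
            intro hh
            have := congrArg List.length hh
            simp at this
            omega
          by_cases hk1 : k + 1 = r.length
          · -- bumping x out of the end of row r
            have hck : r[k] = x := by
              rw [← hlast, List.getLast_eq_getElem]
              congr 1
              omega
            have hsmall : ∀ y ∈ r.dropLast, y ≤ a := by
              intro y hy
              obtain ⟨j, hj, rfl⟩ := List.mem_iff_getElem.1 hy
              rw [List.getElem_dropLast]
              refine hbef' j ?_
              simp at hj
              omega
            have hfi' : r.dropLast.findIdx? (fun y => decide (a < y)) = none := by
              rw [List.findIdx?_eq_none_iff]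
              intro y hy
              simp [Nat.not_lt.2 (hsmall y hy)]
            have hset : r.set k a = r.dropLast ++ [a] :=
              set_eq_dropLast_append r k a hk1
            have hgd : r.getD k 0 = x := by
              rw [List.getD_eq_getElem _ _ hk, hck]
            have hnx : x ∉ r.set k a := by
              rw [hset]
              intro hmem
              rcases List.mem_append.1 hmem with h1 | h1
              · exact absurd (hsmall x h1) (by omega)
              · simp at h1; omega
            have hsetne : r.set k a ≠ [] := by
              intro hh
              have h0 : (r.set k a).length = 0 := by rw [hh]; rfl
              rw [List.length_set] at h0
              omega
            cases rest with
            | nil =>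
              have hrm : removeRM x [r] = [r.dropLast] := by
                rw [removeRM_cons_mem x r [] hxr]
                exact filter_ne_nil _ (by simpa using hdne)
              have hrm2 : removeRM x [[x]] = [] := by
                rw [removeRM_cons_mem x [x] [] (by simp)]; simp
              rw [hrm, rowInsert_cons_none _ _ _ hfi',
                rowInsert_cons_some r [] a k hfi, hgd]
              have hri : rowInsert ([] : List (List ℕ)) x = [[x]] := rfl
              rw [hri, removeRM_cons_not x (r.set k a) [[x]] hnx hsetne, hrm2, hset]
            | cons s rest' =>
              obtain ⟨hsne, _⟩ := hrows s (by simp)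
              have hsmax : ∀ y ∈ s, y ≤ x := hmax s (by simp)
              have hfs : s.findIdx? (fun y => decide (x < y)) = none := by
                rw [List.findIdx?_eq_none_iff]
                intro y hy
                simp [Nat.not_lt.2 (hsmax y hy)]
              have hrm : removeRM x (r :: s :: rest') = r.dropLast :: s :: rest' := by
                rw [removeRM_cons_mem x r _ hxr]
                refine filter_ne_nil _ ?_
                intro row hrow
                rcases List.mem_cons.1 hrow with rfl | hrow
                · exact hdne
                · exact (hrows row (by simp [hrow])).1
              rw [hrm, rowInsert_cons_none _ _ _ hfi',
                rowInsert_cons_some r _ a k hfi, hgd,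
                rowInsert_cons_none s rest' x hfs,
                removeRM_cons_not x (r.set k a) _ hnx hsetne,
                removeRM_cons_mem x (s ++ [x]) rest' (by simp),
                List.dropLast_concat, hset]
              congr 1
              refine (filter_ne_nil _ ?_).symm
              intro row hrow
              rcases List.mem_cons.1 hrow with rfl | hrow
              · exact hsne
              · exact (hrows row (by simp [hrow])).1
          · -- bump stays inside the first r.length - 1 columns
            have hklt : k + 1 < r.length := lt_of_le_of_ne (by omega) hk1
            have hfi' : r.dropLast.findIdx? (fun y => decide (a < y)) = some k := by
              rw [List.findIdx?_eq_some_iff_getElem]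
              refine ⟨by simp [List.length_dropLast]; omega, ?_, ?_⟩
              · rw [List.getElem_dropLast]; simpa using hpk
              · intro j hj
                rw [List.getElem_dropLast]
                exact hbef j hj
            have hgd' : r.dropLast.getD k 0 = r.getD k 0 := by
              rw [List.getD_eq_getElem _ _ (by simp [List.length_dropLast]; omega),
                List.getD_eq_getElem _ _ hk, List.getElem_dropLast]
            have hxset : x ∈ r.set k a := by
              have hL : r.length - 1 < (r.set k a).length := by simp; omega
              have hgl : (r.set k a)[r.length - 1]'hL = x := by
                rw [List.getElem_set_ne (by omega), ← hlast, List.getLast_eq_getElem]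
              exact hgl ▸ List.getElem_mem _
            have hrm : removeRM x (r :: rest) = r.dropLast :: rest := by
              rw [removeRM_cons_mem x r rest hxr]
              refine filter_ne_nil _ ?_
              intro row hrow
              rcases List.mem_cons.1 hrow with rfl | hrow
              · exact hdne
              · exact (hrows row (by simp [hrow])).1
            rw [hrm, rowInsert_cons_some _ _ _ _ hfi', rowInsert_cons_some _ _ _ _ hfi,
              hgd', removeRM_cons_mem x (r.set k a) _ hxset]
            rw [filter_ne_nil, dropLast_set r k a hklt]
            intro row hrow
            rcases List.mem_cons.1 hrow with rfl | hrow
            · intro hh; have := congrArg List.length hh; simp at this; omega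
            · exact rowInsert_ne_nil rest _
                (fun row hr => (hrows row (by simp [hr])).1) row hrow
    · -- x not in the first row
      obtain ⟨row0, hrow0, hxrow0⟩ := hocc
      have hocc' : ∃ row ∈ rest, x ∈ row := by
        rcases List.mem_cons.1 hrow0 with rfl | h
        · exact absurd hxrow0 hxr
        · exact ⟨row0, h, hxrow0⟩
      have hrm : removeRM x (r :: rest) = r :: removeRM x rest :=
        removeRM_cons_not x r rest hxr hne
      cases hfi : r.findIdx? (fun y => decide (a < y)) with
      | none =>
        rw [hrm, rowInsert_cons_none _ _ _ hfi, rowInsert_cons_none _ _ _ hfi,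
          removeRM_cons_not x (r ++ [a]) rest (by
            intro hmem
            rcases List.mem_append.1 hmem with h | h
            · exact hxr h
            · simp at h; omega) (by simp)]
      | some k =>
        obtain ⟨hk, hpk, -⟩ := List.findIdx?_eq_some_iff_getElem.1 hfi
        have hc_mem : r.getD k 0 ∈ r := by
          rw [List.getD_eq_getElem _ _ hk]
          exact List.getElem_mem _
        have hcx : r.getD k 0 < x :=
          lt_of_le_of_ne (hmax r (by simp) _ hc_mem) (fun h => hxr (h ▸ hc_mem))
        have hxset : x ∉ r.set k a := by
          intro hmem
          rcases List.mem_or_eq_of_mem_set hmem with h | h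
          · exact hxr h
          · omega
        rw [hrm, rowInsert_cons_some _ _ _ _ hfi, rowInsert_cons_some _ _ _ _ hfi,
          removeRM_cons_not x (r.set k a) _ hxset (by
            intro hh
            have h0 : (r.set k a).length = 0 := by rw [hh]; rfl
            rw [List.length_set] at h0
            exact hne (List.length_eq_zero_iff.1 h0))]
        have hcol' : ∀ rr cc, cc < ((rest.getD (rr + 1) []).length) →
            (rest.getD rr []).getD cc 0 < (rest.getD (rr + 1) []).getD cc 0 := by
          intro rr cc h
          have h2 := hcol (rr + 1) cc (by simpa only [List.getD_cons_succ] using h)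
          simpa only [List.getD_cons_succ] using h2
        congr 1
        exact ih (r.getD k 0) (fun row hr => hrows row (by simp [hr]))
          (by have h := List.IsChain.tail hlen; simp at h; exact h) hcol'
          (fun row hr => hmax row (by simp [hr])) hocc' hcx

/-- Lemma `vp` key step: if `x` is the largest entry of a semistandard
tableau `P` and `a < x`, then row-inserting `a` commutes with removing the rightmost cell
containing `x`. -/
theorem rowInsert_comm_removeRM (P : List (List ℕ)) (x a : ℕ)
    (hP : IsSSYT P) (hmax : ∀ row ∈ P, ∀ y ∈ row, y ≤ x)
    (hocc : ∃ row ∈ P, x ∈ row) (ha : a < x) :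
    rowInsert (removeRM x P) a = removeRM x (rowInsert P a) := by
  obtain ⟨h1, h2, h3⟩ := hP
  exact key x P a h1 h2 h3 hmax hocc ha

end KingSSOT
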